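/- Let K be a compact convex subset of a locally convex Hausdorff real topological vector space. Every lower semicontinuous affine function f : K → (-∞, ∞] is the pointwise supremum of an upward directed family of continuous affine real-valued functions on K. -/

import Mathlib

open Set Filter Topology

section Aux
variable {E : Type*} [AddCommGroup E] [Module ℝ E]
    [TopologicalSpace E] [IsTopologicalAddGroup E] [ContinuousSMul ℝ E]
    [T2Space E] [LocallyConvexSpace ℝ E]

set_option linter.unusedSectionVars false
set_option linter.unusedVariables false


lemma aux_mul_lt {a m : ℝ} (ha : 0 < a) {u : EReal} (h : (m:EReal) < u) :
    ((a * m : ℝ) : EReal) < (a : EReal) * u := by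
  induction u using EReal.rec with
  | bot => exact absurd h (by simp)
  | coe r =>
      rw [← EReal.coe_mul]
      exact_mod_cast mul_lt_mul_of_pos_left (by exact_mod_cast h) ha
  | top => rw [EReal.coe_mul_top_of_pos ha]; exact EReal.coe_lt_top _



/-- Decomposition of a continuous linear functional on `E × ℝ`. -/
lemma decomp (ℓ : (E × ℝ) →L[ℝ] ℝ) (x : E) (t : ℝ) :
    ℓ (x, t) = ℓ (x, 0) + t * ℓ (0, 1) := by
  have : ((x, t) : E × ℝ) = (x, 0) + t • (0, 1) := by
    simp [Prod.ext_iff]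
  rw [this, map_add, map_smul, smul_eq_mul]

lemma isCompact_convexJoin {s t : Set (E × ℝ)}
    (hs : IsCompact s) (ht : IsCompact t) : IsCompact (convexJoin ℝ s t) := by
  have himg : convexJoin ℝ s t =
      (fun p : ((E × ℝ) × (E × ℝ)) × ℝ => p.2 • p.1.1 + (1 - p.2) • p.1.2) ''
        ((s ×ˢ t) ×ˢ Icc (0:ℝ) 1) := by
    ext z
    simp only [mem_convexJoin, mem_image, mem_prod, segment, mem_setOf_eq]
    constructor
    · rintro ⟨x, hx, y, hy, a, b, ha, hb, hab, hz⟩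
      exact ⟨((x, y), a), ⟨⟨hx, hy⟩, ha, by linarith⟩,
        by rw [show (1:ℝ) - a = b by linarith]; exact hz⟩
    · rintro ⟨⟨⟨x, y⟩, a⟩, ⟨⟨hx, hy⟩, ha0, ha1⟩, rfl⟩
      exact ⟨x, hx, y, hy, a, 1 - a, ha0, by linarith, by ring, rfl⟩
  rw [himg]
  exact ((hs.prod ht).prod isCompact_Icc).image (by fun_prop)




/-- The epigraph of a lsc function on a compact set is closed. -/
lemma epi_closed (K : Set E) (hKcpt : IsCompact K) (f : E → EReal)
    (hflsc : LowerSemicontinuousOn f K) :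
    IsClosed {p : E × ℝ | p.1 ∈ K ∧ f p.1 ≤ (p.2 : EReal)} := by
  rw [← isOpen_compl_iff, isOpen_iff_mem_nhds]
  rintro ⟨x, t⟩ hp
  simp only [mem_compl_iff, mem_setOf_eq, not_and, not_le] at hp
  by_cases hx : x ∈ K
  · have hlt : (t : EReal) < f x := hp hx
    obtain ⟨t', ht1, ht2⟩ := EReal.exists_between_coe_real hlt
    have hev := hflsc x hx (t' : EReal) ht2
    rw [nhdsWithin, eventually_inf_principal] at hev
    have hmem : ({y | y ∈ K → (t' : EReal) < f y} ×ˢ Iio t') ∈ 𝓝 (x, t) :=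
      prod_mem_nhds hev (Iio_mem_nhds (by exact_mod_cast ht1))
    refine mem_of_superset hmem ?_
    rintro ⟨y, s⟩ ⟨hy, hs⟩ ⟨hyK, hfy⟩
    exact absurd hfy (not_le.2 ((by exact_mod_cast hs : (s : EReal) < t').trans (hy hyK)))
  · have hmem : ((Kᶜ : Set E) ×ˢ (univ : Set ℝ)) ∈ 𝓝 (x, t) :=
      prod_mem_nhds (hKcpt.isClosed.isOpen_compl.mem_nhds hx) univ_mem
    exact mem_of_superset hmem (by rintro ⟨y, s⟩ ⟨hy, -⟩ ⟨hyK, -⟩; exact hy hyK)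




lemma epi_convex (K : Set E) (hKcvx : Convex ℝ K) (f : E → EReal)
    (hfbot : ∀ x ∈ K, f x ≠ ⊥)
    (hfaff : ∀ x ∈ K, ∀ y ∈ K, ∀ t : ℝ, 0 ≤ t → t ≤ 1 →
      f (t • x + (1 - t) • y) = (t : EReal) * f x + ((1 - t : ℝ) : EReal) * f y) :
    Convex ℝ {p : E × ℝ | p.1 ∈ K ∧ f p.1 ≤ (p.2 : EReal)} := by
  rintro ⟨x, s⟩ ⟨hx, hxs⟩ ⟨y, t⟩ ⟨hy, hyt⟩ a b ha hb hab
  have hb' : b = 1 - a := by linarith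
  have hxtop : f x ≠ ⊤ := fun h => by simp [h] at hxs
  have hytop : f y ≠ ⊤ := fun h => by simp [h] at hyt
  set r := (f x).toReal with hr
  set r' := (f y).toReal with hr'
  have hfx : (r : EReal) = f x := EReal.coe_toReal hxtop (hfbot x hx)
  have hfy : (r' : EReal) = f y := EReal.coe_toReal hytop (hfbot y hy)
  constructor
  · exact hKcvx hx hy ha hb hab
  · have key := hfaff x hx y hy a ha (by linarith)
    have h1 : a • (x, s) + b • (y, t) = ((a • x + b • y, a * s + b * t) : E × ℝ) := by
      simp [Prod.ext_iff, smul_eq_mul]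
    rw [h1]
    simp only
    rw [hb'] at *
    rw [key, ← hfx, ← hfy]
    have hrs : r ≤ s := by rw [← EReal.coe_le_coe_iff, hfx]; exact hxs
    have hrt : r' ≤ t := by rw [← EReal.coe_le_coe_iff, hfy]; exact hyt
    have : ((a * r + (1 - a) * r' : ℝ) : EReal) ≤ ((a * s + (1 - a) * t : ℝ) : EReal) := by
      apply EReal.coe_le_coe_iff.2
      have h2 : a * r ≤ a * s := mul_le_mul_of_nonneg_left hrs ha
      have h3 : (1 - a) * r' ≤ (1 - a) * t := mul_le_mul_of_nonneg_left hrt (by linarith)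
      linarith
    calc (a : EReal) * (r : EReal) + ((1 - a : ℝ) : EReal) * (r' : EReal)
        = ((a * r + (1 - a) * r' : ℝ) : EReal) := by norm_cast
      _ ≤ ((a * s + (1 - a) * t : ℝ) : EReal) := this





/-- If a linear functional is `< u` on the epigraph, its `ℝ`-component is `≤ 0`. -/
lemma slope_nonpos (K : Set E) (f : E → EReal) (ℓ : (E × ℝ) →L[ℝ] ℝ) (u : ℝ)
    (hsep : ∀ p ∈ {p : E × ℝ | p.1 ∈ K ∧ f p.1 ≤ (p.2 : EReal)}, ℓ p < u)
    {x₁ : E} {t₁ : ℝ} (hx₁ : x₁ ∈ K) (ht₁ : f x₁ ≤ (t₁ : EReal)) :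
    ℓ (0, 1) ≤ 0 := by
  by_contra hc
  push_neg at hc
  set c := ℓ (0, 1)
  set n : ℝ := max 0 ((u - ℓ (x₁, 0) - t₁ * c) / c + 1) with hn
  have hn0 : 0 ≤ n := le_max_left _ _
  have hmem : ((x₁, t₁ + n) : E × ℝ) ∈ {p : E × ℝ | p.1 ∈ K ∧ f p.1 ≤ (p.2 : EReal)} := by
    refine ⟨hx₁, le_trans ht₁ ?_⟩
    exact_mod_cast (by linarith : t₁ ≤ t₁ + n)
  have hlt := hsep _ hmem
  rw [decomp] at hlt
  have hdiv : (u - ℓ (x₁, 0) - t₁ * c) / c < n :=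
    lt_of_lt_of_le (lt_add_one _) (le_max_right _ _)
  have := (div_lt_iff₀ hc).mp hdiv
  nlinarith

/-- Existence of one strict continuous affine minorant. -/
lemma exists_minorant0 (K : Set E) (hKcpt : IsCompact K) (hKcvx : Convex ℝ K)
    (f : E → EReal) (hfbot : ∀ x ∈ K, f x ≠ ⊥)
    (hflsc : LowerSemicontinuousOn f K)
    (hfaff : ∀ x ∈ K, ∀ y ∈ K, ∀ t : ℝ, 0 ≤ t → t ≤ 1 →
      f (t • x + (1 - t) • y) = (t : EReal) * f x + ((1 - t : ℝ) : EReal) * f y)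
    {x₁ : E} (hx₁ : x₁ ∈ K) (hx₁top : f x₁ ≠ ⊤) :
    ∃ (g : E →L[ℝ] ℝ) (c : ℝ), ∀ x ∈ K, ((g x + c : ℝ) : EReal) < f x := by
  set C := {p : E × ℝ | p.1 ∈ K ∧ f p.1 ≤ (p.2 : EReal)} with hC
  set t₁ := (f x₁).toReal with ht₁
  have hfx₁ : ((t₁ : ℝ) : EReal) = f x₁ := EReal.coe_toReal hx₁top (hfbot x₁ hx₁)
  have hpnot : ((x₁, t₁ - 1) : E × ℝ) ∉ C := by
    rintro ⟨-, habs⟩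
    rw [← hfx₁] at habs
    have : t₁ ≤ t₁ - 1 := EReal.coe_le_coe_iff.mp habs
    linarith
  obtain ⟨ℓ, u, hsep, hpu⟩ := geometric_hahn_banach_closed_point
    (epi_convex K hKcvx f hfbot hfaff) (epi_closed K hKcpt f hflsc) hpnot
  set c := ℓ (0, 1) with hc
  have hc0 : c ≤ 0 := slope_nonpos K f ℓ u hsep hx₁ hfx₁.symm.le
  have hcne : c < 0 := by
    rcases lt_or_eq_of_le hc0 with h | h
    · exact h
    · exfalso
      have h1 := hsep (x₁, t₁) ⟨hx₁, hfx₁.symm.le⟩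
      rw [decomp] at h1 hpu
      rw [← h] at h1 hpu
      linarith
  refine ⟨(-(c⁻¹)) • (ℓ.comp (ContinuousLinearMap.inl ℝ E ℝ)), u / c, fun x hx => ?_⟩
  have hval : ((-(c⁻¹)) • (ℓ.comp (ContinuousLinearMap.inl ℝ E ℝ))) x + u / c
      = (u - ℓ (x, 0)) / c := by
    simp [ContinuousLinearMap.smul_apply, ContinuousLinearMap.comp_apply,
      ContinuousLinearMap.inl_apply]
    field_simp
    ring
  rw [hval]
  by_cases hxtop : f x = ⊤
  · rw [hxtop]; exact EReal.coe_lt_top _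
  · have hfx : (((f x).toReal : ℝ) : EReal) = f x := EReal.coe_toReal hxtop (hfbot x hx)
    have h1 := hsep (x, (f x).toReal) ⟨hx, hfx.symm.le⟩
    rw [decomp] at h1
    rw [← hfx]
    apply EReal.coe_lt_coe_iff.mpr
    rw [div_lt_iff_of_neg hcne]
    nlinarith

lemma exists_minorant_lt (K : Set E) (hKcpt : IsCompact K) (hKcvx : Convex ℝ K)
    (f : E → EReal) (hfbot : ∀ x ∈ K, f x ≠ ⊥)
    (hflsc : LowerSemicontinuousOn f K)
    (hfaff : ∀ x ∈ K, ∀ y ∈ K, ∀ t : ℝ, 0 ≤ t → t ≤ 1 →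
      f (t • x + (1 - t) • y) = (t : EReal) * f x + ((1 - t : ℝ) : EReal) * f y)
    {x₁ : E} (hx₁ : x₁ ∈ K) (hx₁top : f x₁ ≠ ⊤)
    {x₀ : E} (hx₀ : x₀ ∈ K) {r : ℝ} (hr : (r : EReal) < f x₀) :
    ∃ (g : E →L[ℝ] ℝ) (c : ℝ),
      (∀ x ∈ K, ((g x + c : ℝ) : EReal) < f x) ∧ r < g x₀ + c := by
  set C := {p : E × ℝ | p.1 ∈ K ∧ f p.1 ≤ (p.2 : EReal)} with hCdef
  have hpnot : ((x₀, r) : E × ℝ) ∉ C := fun h => absurd h.2 (not_le.2 hr)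
  obtain ⟨ℓ, u, hsep, hpu⟩ := geometric_hahn_banach_closed_point
    (epi_convex K hKcvx f hfbot hfaff) (epi_closed K hKcpt f hflsc) hpnot
  set c := ℓ (0, 1) with hc
  have ht₁ : ((f x₁).toReal : EReal) = f x₁ := EReal.coe_toReal hx₁top (hfbot x₁ hx₁)
  have hc0 : c ≤ 0 := slope_nonpos K f ℓ u hsep hx₁ ht₁.symm.le
  rcases lt_or_eq_of_le hc0 with hcneg | hczero
  · -- c < 0 : direct construction
    refine ⟨(-(c⁻¹)) • (ℓ.comp (ContinuousLinearMap.inl ℝ E ℝ)), u / c, ?_, ?_⟩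
    · intro x hx
      have hval : ((-(c⁻¹)) • (ℓ.comp (ContinuousLinearMap.inl ℝ E ℝ))) x + u / c
          = (u - ℓ (x, 0)) / c := by
        simp [ContinuousLinearMap.smul_apply, ContinuousLinearMap.comp_apply,
          ContinuousLinearMap.inl_apply]
        field_simp
        ring
      rw [hval]
      by_cases hxtop : f x = ⊤
      · rw [hxtop]; exact EReal.coe_lt_top _
      · have hfx : (((f x).toReal : ℝ) : EReal) = f x := EReal.coe_toReal hxtop (hfbot x hx)
        have h1 := hsep (x, (f x).toReal) ⟨hx, hfx.symm.le⟩
        rw [decomp] at h1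
        rw [← hfx]
        apply EReal.coe_lt_coe_iff.mpr
        rw [div_lt_iff_of_neg hcneg]
        nlinarith
    · have hval : ((-(c⁻¹)) • (ℓ.comp (ContinuousLinearMap.inl ℝ E ℝ))) x₀ + u / c
          = (u - ℓ (x₀, 0)) / c := by
        simp [ContinuousLinearMap.smul_apply, ContinuousLinearMap.comp_apply,
          ContinuousLinearMap.inl_apply]
        field_simp
        ring
      rw [hval, lt_div_iff_of_neg hcneg]
      have h2 := hpu
      rw [decomp] at h2
      nlinarith
  · -- c = 0 : use a fixed minorant plus a large multiple of `ℓ(x,0) - u`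
    obtain ⟨g₀, c₀, hg₀⟩ := exists_minorant0 K hKcpt hKcvx f hfbot hflsc hfaff hx₁ hx₁top
    have hgap : u < ℓ (x₀, 0) := by
      have h2 := hpu
      rw [decomp] at h2
      have hl0 : ℓ ((0 : E), (1 : ℝ)) = 0 := hczero
      rw [hl0] at h2; linarith
    set lam : ℝ := max 0 ((r + 1 - (g₀ x₀ + c₀)) / (ℓ (x₀, 0) - u)) with hlam
    have hlam0 : 0 ≤ lam := le_max_left _ _
    refine ⟨g₀ + lam • (ℓ.comp (ContinuousLinearMap.inl ℝ E ℝ)), c₀ - lam * u, ?_, ?_⟩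
    · intro x hx
      have hval : (g₀ + lam • (ℓ.comp (ContinuousLinearMap.inl ℝ E ℝ))) x + (c₀ - lam * u)
          = (g₀ x + c₀) + lam * (ℓ (x, 0) - u) := by
        simp [ContinuousLinearMap.add_apply, ContinuousLinearMap.smul_apply,
          ContinuousLinearMap.comp_apply, ContinuousLinearMap.inl_apply]
        ring
      rw [hval]
      by_cases hxtop : f x = ⊤
      · rw [hxtop]; exact EReal.coe_lt_top _
      · have hfx : (((f x).toReal : ℝ) : EReal) = f x := EReal.coe_toReal hxtop (hfbot x hx)
        have h1 := hsep (x, (f x).toReal) ⟨hx, hfx.symm.le⟩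
        rw [decomp] at h1
        have hl0 : ℓ ((0 : E), (1 : ℝ)) = 0 := hczero
        rw [hl0] at h1
        have hpen : lam * (ℓ (x, 0) - u) ≤ 0 :=
          mul_nonpos_iff.mpr (Or.inl ⟨hlam0, by linarith⟩)
        calc ((g₀ x + c₀ + lam * (ℓ (x, 0) - u) : ℝ) : EReal)
            ≤ ((g₀ x + c₀ : ℝ) : EReal) := EReal.coe_le_coe_iff.mpr (by linarith)
          _ < f x := hg₀ x hx
    · have hval : (g₀ + lam • (ℓ.comp (ContinuousLinearMap.inl ℝ E ℝ))) x₀ + (c₀ - lam * u)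
          = (g₀ x₀ + c₀) + lam * (ℓ (x₀, 0) - u) := by
        simp [ContinuousLinearMap.add_apply, ContinuousLinearMap.smul_apply,
          ContinuousLinearMap.comp_apply, ContinuousLinearMap.inl_apply]
        ring
      rw [hval]
      have hgap' : 0 < ℓ (x₀, 0) - u := by linarith
      have hdle : (r + 1 - (g₀ x₀ + c₀)) / (ℓ (x₀, 0) - u) ≤ lam := le_max_right _ _
      have := (div_le_iff₀ hgap').mp hdle
      linarith

lemma graph_convex (K : Set E) (hKcvx : Convex ℝ K) (g : E →L[ℝ] ℝ) (c : ℝ) :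
    Convex ℝ ((fun x => ((x, g x + c) : E × ℝ)) '' K) := by
  rintro _ ⟨x, hx, rfl⟩ _ ⟨y, hy, rfl⟩ a b ha hb hab
  refine ⟨a • x + b • y, hKcvx hx hy ha hb hab, ?_⟩
  rw [Prod.ext_iff]
  constructor
  · rfl
  · simp only [Prod.smul_mk, Prod.mk_add_mk, smul_eq_mul, map_add, map_smul, smul_eq_mul]
    rw [show b = 1 - a by linarith]; ring

lemma exists_dominating (K : Set E) (hKcpt : IsCompact K) (hKcvx : Convex ℝ K)
    (f : E → EReal) (hfbot : ∀ x ∈ K, f x ≠ ⊥)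
    (hflsc : LowerSemicontinuousOn f K)
    (hfaff : ∀ x ∈ K, ∀ y ∈ K, ∀ t : ℝ, 0 ≤ t → t ≤ 1 →
      f (t • x + (1 - t) • y) = (t : EReal) * f x + ((1 - t : ℝ) : EReal) * f y)
    {x₁ : E} (hx₁ : x₁ ∈ K) (hx₁top : f x₁ ≠ ⊤)
    (g₁ g₂ : E →L[ℝ] ℝ) (c₁ c₂ : ℝ)
    (hm₁ : ∀ x ∈ K, ((g₁ x + c₁ : ℝ) : EReal) < f x)
    (hm₂ : ∀ x ∈ K, ((g₂ x + c₂ : ℝ) : EReal) < f x) :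
    ∃ (g₃ : E →L[ℝ] ℝ) (c₃ : ℝ),
      (∀ x ∈ K, ((g₃ x + c₃ : ℝ) : EReal) < f x) ∧
      (∀ x ∈ K, g₁ x + c₁ ≤ g₃ x + c₃) ∧ (∀ x ∈ K, g₂ x + c₂ ≤ g₃ x + c₃) := by
  set C := {p : E × ℝ | p.1 ∈ K ∧ f p.1 ≤ (p.2 : EReal)} with hCdef
  set G₁ := (fun x => ((x, g₁ x + c₁) : E × ℝ)) '' K with hG₁
  set G₂ := (fun x => ((x, g₂ x + c₂) : E × ℝ)) '' K with hG₂
  have hG₁cpt : IsCompact G₁ :=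
    hKcpt.image (continuous_id.prodMk (g₁.continuous.add continuous_const))
  have hG₂cpt : IsCompact G₂ :=
    hKcpt.image (continuous_id.prodMk (g₂.continuous.add continuous_const))
  set D := convexJoin ℝ G₁ G₂ with hD
  have hDcpt : IsCompact D := isCompact_convexJoin hG₁cpt hG₂cpt
  have hDcvx : Convex ℝ D :=
    (graph_convex K hKcvx g₁ c₁).convexJoin (graph_convex K hKcvx g₂ c₂)
  have hdisj : Disjoint D C := by
    rw [Set.disjoint_left]
    rintro z hzD hzC
    rw [hD, mem_convexJoin] at hzD
    obtain ⟨p, hp, q, hq, hseg⟩ := hzD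
    obtain ⟨x, hx, rfl⟩ := hp
    obtain ⟨y, hy, rfl⟩ := hq
    obtain ⟨a, b, ha, hb, hab, rfl⟩ := hseg
    obtain ⟨hzK, hzle⟩ := hzC
    have hb' : b = 1 - a := by linarith
    have hz1 : (a • ((x, g₁ x + c₁) : E × ℝ) + b • (y, g₂ y + c₂)).1 = a • x + b • y := rfl
    have hz2 : (a • ((x, g₁ x + c₁) : E × ℝ) + b • (y, g₂ y + c₂)).2
        = a * (g₁ x + c₁) + b * (g₂ y + c₂) := rfl
    rw [hz1] at hzle
    rw [hz2] at hzle
    have key := hfaff x hx y hy a ha (by linarith)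
    rw [← hb'] at key
    rcases eq_or_lt_of_le ha with ha0 | hapos
    · -- a = 0
      rw [← ha0] at hzle hab
      have hb1 : b = 1 := by linarith
      rw [hb1] at hzle
      simp only [zero_smul, one_smul, zero_add, zero_mul, one_mul] at hzle
      exact absurd hzle (not_le.2 (hm₂ y hy))
    rcases eq_or_lt_of_le hb with hb0 | hbpos
    · -- b = 0
      rw [← hb0] at hzle hab
      have ha1 : a = 1 := by linarith
      rw [ha1] at hzle
      simp only [zero_smul, one_smul, add_zero, zero_mul, mul_zero, one_mul] at hzle
      exact absurd hzle (not_le.2 (hm₁ x hx))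
    · -- 0 < a, 0 < b
      have h1 : ((a * (g₁ x + c₁) : ℝ) : EReal) < (a : EReal) * f x :=
        aux_mul_lt hapos (hm₁ x hx)
      have h2 : ((b * (g₂ y + c₂) : ℝ) : EReal) < (b : EReal) * f y :=
        aux_mul_lt hbpos (hm₂ y hy)
      have hsum : ((a * (g₁ x + c₁) + b * (g₂ y + c₂) : ℝ) : EReal)
          < (a : EReal) * f x + (b : EReal) * f y := by
        rw [EReal.coe_add]
        exact EReal.add_lt_add h1 h2
      rw [hb'] at key hsum
      rw [← key] at hsum
      rw [← hb'] at hsum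
      exact absurd hzle (not_le.2 hsum)
  obtain ⟨ℓ, u, v, hsepD, huv, hsepC⟩ := geometric_hahn_banach_compact_closed hDcvx hDcpt
    (epi_convex K hKcvx f hfbot hfaff) (epi_closed K hKcpt f hflsc) hdisj
  set c := ℓ (0, 1) with hc
  have ht₁ : ((f x₁).toReal : EReal) = f x₁ := EReal.coe_toReal hx₁top (hfbot x₁ hx₁)
  have hc0 : 0 ≤ c := by
    have := slope_nonpos K f (-ℓ) (-v)
      (fun p hp => by
        simp only [ContinuousLinearMap.neg_apply, neg_lt_neg_iff]
        exact hsepC p hp) hx₁ ht₁.symm.le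
    simp only [ContinuousLinearMap.neg_apply, neg_nonpos] at this
    exact this
  have hG₂ne : G₂.Nonempty := ⟨_, ⟨x₁, hx₁, rfl⟩⟩
  have hx₁D : ((x₁, g₁ x₁ + c₁) : E × ℝ) ∈ D :=
    subset_convexJoin_left (𝕜 := ℝ) hG₂ne ⟨x₁, hx₁, rfl⟩
  have hcpos : 0 < c := by
    rcases eq_or_lt_of_le hc0 with hczero | h
    · exfalso
      have h1 := hsepD _ hx₁D
      have h2 := hsepC (x₁, (f x₁).toReal) ⟨hx₁, ht₁.symm.le⟩
      rw [decomp] at h1 h2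
      have hl0 : ℓ ((0 : E), (1 : ℝ)) = 0 := hczero.symm
      rw [hl0] at h1 h2
      linarith
    · exact h
  refine ⟨(-(c⁻¹)) • (ℓ.comp (ContinuousLinearMap.inl ℝ E ℝ)), v / c, ?_, ?_, ?_⟩
  · intro x hx
    have hval : ((-(c⁻¹)) • (ℓ.comp (ContinuousLinearMap.inl ℝ E ℝ))) x + v / c
        = (v - ℓ (x, 0)) / c := by
      simp [ContinuousLinearMap.smul_apply, ContinuousLinearMap.comp_apply,
        ContinuousLinearMap.inl_apply]
      field_simp
      ring
    rw [hval]
    by_cases hxtop : f x = ⊤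
    · rw [hxtop]; exact EReal.coe_lt_top _
    · have hfx : (((f x).toReal : ℝ) : EReal) = f x := EReal.coe_toReal hxtop (hfbot x hx)
      have h2 := hsepC (x, (f x).toReal) ⟨hx, hfx.symm.le⟩
      rw [decomp] at h2
      rw [← hfx]
      apply EReal.coe_lt_coe_iff.mpr
      rw [div_lt_iff₀ hcpos]
      nlinarith
  · intro x hx
    have hval : ((-(c⁻¹)) • (ℓ.comp (ContinuousLinearMap.inl ℝ E ℝ))) x + v / c
        = (v - ℓ (x, 0)) / c := by
      simp [ContinuousLinearMap.smul_apply, ContinuousLinearMap.comp_apply,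
        ContinuousLinearMap.inl_apply]
      field_simp
      ring
    rw [hval]
    have hxD : ((x, g₁ x + c₁) : E × ℝ) ∈ D :=
      subset_convexJoin_left (𝕜 := ℝ) hG₂ne ⟨x, hx, rfl⟩
    have h1 := hsepD _ hxD
    rw [decomp] at h1
    rw [le_div_iff₀ hcpos]
    nlinarith
  · intro x hx
    have hval : ((-(c⁻¹)) • (ℓ.comp (ContinuousLinearMap.inl ℝ E ℝ))) x + v / c
        = (v - ℓ (x, 0)) / c := by
      simp [ContinuousLinearMap.smul_apply, ContinuousLinearMap.comp_apply,
        ContinuousLinearMap.inl_apply]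
      field_simp
      ring
    rw [hval]
    have hG₁ne : G₁.Nonempty := ⟨_, ⟨x₁, hx₁, rfl⟩⟩
    have hxD : ((x, g₂ x + c₂) : E × ℝ) ∈ D :=
      subset_convexJoin_right (𝕜 := ℝ) hG₁ne ⟨x, hx, rfl⟩
    have h1 := hsepD _ hxD
    rw [decomp] at h1
    rw [le_div_iff₀ hcpos]
    nlinarith

end Aux

/-- Every lower semicontinuous affine function
`f : K → (-∞, ∞]` on a compact convex set is the pointwise supremum of an
upward directed family of continuous affine real-valued functions on `K`. -/
theorem laff_eq_sup_directed_aff {E : Type*} [AddCommGroup E] [Module ℝ E]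
    [TopologicalSpace E] [IsTopologicalAddGroup E] [ContinuousSMul ℝ E]
    [T2Space E] [LocallyConvexSpace ℝ E]
    (K : Set E) (hKcpt : IsCompact K) (hKcvx : Convex ℝ K)
    (f : E → EReal) (hfbot : ∀ x ∈ K, f x ≠ ⊥)
    (hflsc : LowerSemicontinuousOn f K)
    (hfaff : ∀ x ∈ K, ∀ y ∈ K, ∀ t : ℝ, 0 ≤ t → t ≤ 1 →
      f (t • x + (1 - t) • y) = (t : EReal) * f x + ((1 - t : ℝ) : EReal) * f y) :
    ∃ F : Set (E → ℝ),
      (∀ h ∈ F, ContinuousOn h K ∧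
        ∀ x ∈ K, ∀ y ∈ K, ∀ t : ℝ, 0 ≤ t → t ≤ 1 →
          h (t • x + (1 - t) • y) = t * h x + (1 - t) * h y) ∧
      (∀ h₁ ∈ F, ∀ h₂ ∈ F, ∃ h₃ ∈ F, (∀ x ∈ K, h₁ x ≤ h₃ x) ∧ ∀ x ∈ K, h₂ x ≤ h₃ x) ∧
      (∀ x ∈ K, f x = ⨆ h ∈ F, ((h x : ℝ) : EReal)) := by
  by_cases hdom : ∃ x₁ ∈ K, f x₁ ≠ ⊤
  · obtain ⟨x₁, hx₁, hx₁top⟩ := hdom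
    refine ⟨{h : E → ℝ | (∃ (g : E →L[ℝ] ℝ) (c : ℝ), h = fun x => g x + c) ∧
        ∀ x ∈ K, ((h x : ℝ) : EReal) < f x}, ?_, ?_, ?_⟩
    · rintro h ⟨⟨g, c, rfl⟩, -⟩
      refine ⟨(g.continuous.add continuous_const).continuousOn, ?_⟩
      intro x _ y _ t _ _
      simp only [map_add, map_smul, smul_eq_mul]
      ring
    · rintro h₁ ⟨⟨g₁, c₁, rfl⟩, hm₁⟩ h₂ ⟨⟨g₂, c₂, rfl⟩, hm₂⟩
      obtain ⟨g₃, c₃, hm₃, hle₁, hle₂⟩ := exists_dominating K hKcpt hKcvx f hfbot hflsc hfaff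
        hx₁ hx₁top g₁ g₂ c₁ c₂ hm₁ hm₂
      exact ⟨fun x => g₃ x + c₃, ⟨⟨g₃, c₃, rfl⟩, hm₃⟩, hle₁, hle₂⟩
    · intro x₀ hx₀
      refine le_antisymm ?_ (iSup₂_le fun h hh => (hh.2 x₀ hx₀).le)
      by_contra hS
      push_neg at hS
      obtain ⟨r, hSr, hrf⟩ := EReal.exists_between_coe_real hS
      obtain ⟨g, c, hmin, hrlt⟩ := exists_minorant_lt K hKcpt hKcvx f hfbot hflsc hfaff
        hx₁ hx₁top hx₀ hrf
      have hmem : (fun x => g x + c) ∈ {h : E → ℝ | (∃ (g : E →L[ℝ] ℝ) (c : ℝ),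
          h = fun x => g x + c) ∧ ∀ x ∈ K, ((h x : ℝ) : EReal) < f x} :=
        ⟨⟨g, c, rfl⟩, hmin⟩
      have hle : ((g x₀ + c : ℝ) : EReal) ≤ ⨆ h ∈ {h : E → ℝ | (∃ (g : E →L[ℝ] ℝ) (c : ℝ),
          h = fun x => g x + c) ∧ ∀ x ∈ K, ((h x : ℝ) : EReal) < f x}, ((h x₀ : ℝ) : EReal) :=
        le_iSup₂_of_le _ hmem le_rfl
      have : ((g x₀ + c : ℝ) : EReal) < ((g x₀ + c : ℝ) : EReal) :=
        lt_of_le_of_lt hle (lt_trans hSr (EReal.coe_lt_coe_iff.mpr hrlt))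
      exact lt_irrefl _ this
  · push_neg at hdom
    refine ⟨{h : E → ℝ | ∃ c : ℝ, h = fun _ => c}, ?_, ?_, ?_⟩
    · rintro h ⟨c, rfl⟩
      exact ⟨continuousOn_const, fun x _ y _ t _ _ => by ring⟩
    · rintro h₁ ⟨c₁, rfl⟩ h₂ ⟨c₂, rfl⟩
      exact ⟨fun _ => max c₁ c₂, ⟨max c₁ c₂, rfl⟩,
        fun x _ => le_max_left _ _, fun x _ => le_max_right _ _⟩
    · intro x₀ hx₀
      rw [hdom x₀ hx₀]
      refine le_antisymm ?_ le_top
      by_contra hS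
      push_neg at hS
      obtain ⟨r, hSr, -⟩ := EReal.exists_between_coe_real hS
      have hle : (((r + 1 : ℝ)) : EReal) ≤ ⨆ h ∈ {h : E → ℝ | ∃ c : ℝ, h = fun _ => c},
          ((h x₀ : ℝ) : EReal) :=
        le_iSup₂_of_le (fun _ => r + 1) ⟨r + 1, rfl⟩ le_rfl
      have h1 : ((r : ℝ) : EReal) < ((r + 1 : ℝ) : EReal) := EReal.coe_lt_coe_iff.mpr (by linarith)
      exact lt_irrefl _ (lt_of_le_of_lt hle (lt_trans hSr h1))
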